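/- arXiv:1603.09028 — 6 statements merged into one kernel-verified Lean document; each statement's English description precedes it below -/
import Mathlib

section
/- Let (V,E,∂) be a locally finite graph and suppose given a vertex-coupling family of boundary maps on it, with c² := sup_{v∈V} ‖f ↦ (Γ_{v,e}f)_{e∈E_v} : H¹_v → ⊕_{e∈E_v} G_e‖² < ∞. Then the vertex-coupled space H¹ is a closed subspace of the Hilbert sum H^{1,dec} = ⊕_{v∈V} H¹_v, the coupled boundary map Γ is well defined (the value (Γf)_e does not depend on the choice of endpoint of e), and Γ is bounded with ‖Γf‖²_{⊕_{e∈E} G_e} ≤ (c²/2)·‖f‖²_{H^{1,dec}} for every f ∈ H¹. -/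
/-- A locally finite graph: countable vertex set `V`, countable edge set `E`,
incidence map `bd e = (∂₋e, ∂₊e)`, no loops, and finitely many edges at each vertex. -/
structure LocallyFiniteGraph (V E : Type*) [Countable V] [Countable E] where
  bd : E → V × V
  no_loops : ∀ e, (bd e).1 ≠ (bd e).2
  locFin : ∀ v : V, {e : E | (bd e).1 = v ∨ (bd e).2 = v}.Finite

/-- Given a vertex-coupling family of boundary maps
`Γ_{v,e} : H¹_v → G_e` (`v ∈ V`, `e ∈ E_v`) with
`c² = sup_v ‖f ↦ (Γ_{v,e} f)_{e ∈ E_v}‖² < ∞`, the vertex-coupled space `H¹` is a closed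
subspace of the ℓ²-direct sum `H^{1,dec} = ⊕_v H¹_v`, the coupled boundary map
`Γ f = (Γ_{∂₋e,e} f_{∂₋e})_e` is well defined (independent of the choice of endpoint,
and an element of `⊕_e G_e`), and it is bounded with `‖Γ f‖² ≤ (c²/2)·‖f‖²`. -/
theorem stmt0 {V E : Type*} [Countable V] [Countable E]
    (G : LocallyFiniteGraph V E)
    (H1 : V → Type*) [∀ v, NormedAddCommGroup (H1 v)] [∀ v, InnerProductSpace ℂ (H1 v)]
    [∀ v, CompleteSpace (H1 v)]
    (Gb : E → Type*) [∀ e, NormedAddCommGroup (Gb e)] [∀ e, InnerProductSpace ℂ (Gb e)]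
    [∀ e, CompleteSpace (Gb e)]
    (Γ : ∀ v, ∀ e, H1 v →L[ℂ] Gb e)
    (c : ℝ)
    (hc : ∀ v, ∀ f : H1 v,
      ∑ e ∈ (G.locFin v).toFinset, ‖Γ v e f‖ ^ 2 ≤ c ^ 2 * ‖f‖ ^ 2) :
    IsClosed {f : lp H1 2 |
        ∀ e, Γ (G.bd e).1 e (f (G.bd e).1) = Γ (G.bd e).2 e (f (G.bd e).2)} ∧
    ∀ f : lp H1 2,
      (∀ e, Γ (G.bd e).1 e (f (G.bd e).1) = Γ (G.bd e).2 e (f (G.bd e).2)) →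
      -- the coupled boundary map is well defined: the value at `e` does not depend on the
      -- chosen endpoint of `e`, and the resulting family lies in `⊕_e G_e` ...
      (∀ e, ∀ v, ((G.bd e).1 = v ∨ (G.bd e).2 = v) →
          Γ v e (f v) = Γ (G.bd e).1 e (f (G.bd e).1)) ∧
      Memℓp (fun e => Γ (G.bd e).1 e (f (G.bd e).1)) 2 ∧
      -- ... and `Γ` is bounded with `‖Γ f‖² ≤ (c²/2)·‖f‖²`
      ∑' e, ‖Γ (G.bd e).1 e (f (G.bd e).1)‖ ^ 2 ≤ c ^ 2 / 2 * ‖f‖ ^ 2 := by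
  have hp2 : (2 : ENNReal).toReal = 2 := by norm_num
  have hp2' : (0 : ℝ) < (2 : ENNReal).toReal := by rw [hp2]; norm_num
  have hrpow : ∀ (x : ℝ), 0 ≤ x → x ^ (2 : ENNReal).toReal = x ^ 2 := by
    intro x hx
    rw [hp2]
    rw [show (2:ℝ) = ((2:ℕ):ℝ) by norm_num, Real.rpow_natCast]
  -- continuity of evaluation
  have heval : ∀ v : V, Continuous fun f : lp H1 2 => f v := by
    intro v
    refine AddMonoidHomClass.continuous_of_bound
      (AddMonoidHom.mk' (fun f : lp H1 2 => f v) (fun f g => rfl)) 1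
      (fun f => ?_)
    rw [one_mul]; exact lp.norm_apply_le_norm two_ne_zero f v
  constructor
  · have hset : {f : lp H1 2 |
        ∀ e, Γ (G.bd e).1 e (f (G.bd e).1) = Γ (G.bd e).2 e (f (G.bd e).2)}
        = ⋂ e, {f : lp H1 2 | Γ (G.bd e).1 e (f (G.bd e).1) = Γ (G.bd e).2 e (f (G.bd e).2)} := by
      ext f; simp [Set.mem_iInter]
    rw [hset]
    refine isClosed_iInter fun e => isClosed_eq ?_ ?_
    · exact (Γ (G.bd e).1 e).continuous.comp (heval _)
    · exact (Γ (G.bd e).2 e).continuous.comp (heval _)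
  · intro f hf
    have hnn : ∀ (e : E) (v : V), (0:ℝ) ≤ ‖Γ v e (f v)‖ ^ 2 := fun e v => by positivity
    -- key finite estimate
    have key : ∀ s : Finset E,
        ∑ e ∈ s, ‖Γ (G.bd e).1 e (f (G.bd e).1)‖ ^ 2 ≤ c ^ 2 / 2 * ‖f‖ ^ 2 := by
      intro s
      classical
      set T : Finset V := s.image (fun e => (G.bd e).1) ∪ s.image (fun e => (G.bd e).2) with hT
      have h2 : ∀ e ∈ s, 2 * ‖Γ (G.bd e).1 e (f (G.bd e).1)‖ ^ 2
          = ∑ v ∈ T, if (G.bd e).1 = v ∨ (G.bd e).2 = v then ‖Γ v e (f v)‖ ^ 2 else 0 := by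
        intro e he
        rw [Finset.sum_ite, Finset.sum_const_zero, add_zero]
        have hfil : T.filter (fun v => (G.bd e).1 = v ∨ (G.bd e).2 = v)
            = {(G.bd e).1, (G.bd e).2} := by
          ext v
          simp only [Finset.mem_filter, Finset.mem_insert, Finset.mem_singleton, hT,
            Finset.mem_union, Finset.mem_image]
          constructor
          · rintro ⟨_, h | h⟩
            · exact Or.inl h.symm
            · exact Or.inr h.symm
          · rintro (rfl | rfl)
            · exact ⟨Or.inl ⟨e, he, rfl⟩, Or.inl rfl⟩
            · exact ⟨Or.inr ⟨e, he, rfl⟩, Or.inr rfl⟩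
        rw [hfil, Finset.sum_pair (G.no_loops e), ← hf e, two_mul]
      have hmain : 2 * ∑ e ∈ s, ‖Γ (G.bd e).1 e (f (G.bd e).1)‖ ^ 2 ≤ c ^ 2 * ‖f‖ ^ 2 := by
            rw [Finset.mul_sum, Finset.sum_congr rfl h2, Finset.sum_comm]
            have step1 : ∀ v ∈ T,
                (∑ e ∈ s, if (G.bd e).1 = v ∨ (G.bd e).2 = v then ‖Γ v e (f v)‖ ^ 2 else 0)
                ≤ c ^ 2 * ‖f v‖ ^ 2 := by
              intro v _
              rw [Finset.sum_ite, Finset.sum_const_zero, add_zero]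
              refine le_trans ?_ (hc v (f v))
              refine Finset.sum_le_sum_of_subset_of_nonneg ?_ (fun e _ _ => hnn e v)
              intro e he
              simp only [Finset.mem_filter] at he
              simpa using he.2
            refine le_trans (Finset.sum_le_sum step1) ?_
            rw [← Finset.mul_sum]
            have hc2 : (0:ℝ) ≤ c ^ 2 := by positivity
            refine mul_le_mul_of_nonneg_left ?_ hc2
            have := lp.sum_rpow_le_norm_rpow hp2' f T
            rw [hrpow _ (norm_nonneg f)] at this
            refine le_trans (le_of_eq ?_) this
            exact (Finset.sum_congr rfl fun v _ => (hrpow _ (norm_nonneg _)).symm)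
      linarith
    have hmem : Memℓp (fun e => Γ (G.bd e).1 e (f (G.bd e).1)) 2 := by
      refine memℓp_gen' (C := c ^ 2 / 2 * ‖f‖ ^ 2) fun s => ?_
      refine le_trans (le_of_eq ?_) (key s)
      exact Finset.sum_congr rfl fun e _ => hrpow _ (norm_nonneg _)
    refine ⟨?_, hmem, ?_⟩
    · intro e v hv
      rcases hv with h | h
      · rw [← h]
      · rw [← h, hf e]
    · have hsum : Summable fun e => ‖Γ (G.bd e).1 e (f (G.bd e).1)‖ ^ 2 := by
        have := hmem.summable hp2'
        refine this.congr fun e => hrpow _ (norm_nonneg _)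
      exact Summable.tsum_le_of_sum_le hsum key
end

section
/- Let (V,E,∂) be a locally finite graph with deg v ≥ 1 for every v ∈ V, let z ∈ ℂ with z ≠ 1, and let φ : E → ℂ. Define f : V ⊕ E → ℂ by f(e) := φ(e) for e ∈ E and f(v) := (1/((1−z)·deg v))·Σ_{e∈E_v} φ(e) for v ∈ V. Then: (i) (Δ_{SG} f)(v) = z·f(v) for every v ∈ V (f solves the Dirichlet problem on the subdivision graph with boundary data φ on E); (ii) for every e ∈ E, (Δ_{SG} f)(e) − z·φ(e) = (1−z)·φ(e) − (1/(2(1−z)))·Σ_{v∈{∂₋e,∂₊e}} (1/deg v)·Σ_{e'∈E_v} φ(e'). In other words, the Dirichlet-to-Neumann operator of the subdivision graph with boundary E is given by the explicit formula in (ii). -/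
/-- The degree of a vertex in a locally finite graph. -/
noncomputable def LocallyFiniteGraph.deg {V E : Type*} [Countable V] [Countable E]
    (G : LocallyFiniteGraph V E) (v : V) : ℕ :=
  (G.locFin v).toFinset.card

/-- On the subdivision graph `SG` (vertex set `V ⊕ E`, each `e` joined
to its endpoints), the function `f` with `f(e) = φ(e)` and
`f(v) = (1/((1−z)·deg v))·Σ_{e∈E_v} φ(e)` solves the Dirichlet problem
`(Δ_{SG} f)(v) = z·f(v)` at all `v ∈ V`, and on the boundary `E` one has the explicit
Dirichlet-to-Neumann formula
`(Δ_{SG} f)(e) − z·φ(e) = (1−z)·φ(e) − (1/(2(1−z)))·Σ_{v=∂₋e,∂₊e} (1/deg v)·Σ_{e'∈E_v} φ(e')`. -/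
theorem stmt5 {V E : Type*} [Countable V] [Countable E]
    (G : LocallyFiniteGraph V E) (hdeg : ∀ v, 1 ≤ G.deg v)
    (z : ℂ) (hz : z ≠ 1) (φ : E → ℂ)
    (f : V ⊕ E → ℂ)
    (hfE : ∀ e, f (Sum.inr e) = φ e)
    (hfV : ∀ v, f (Sum.inl v) =
      (1 / ((1 - z) * (G.deg v : ℂ))) * ∑ e ∈ (G.locFin v).toFinset, φ e) :
    -- (i) `f` solves the Dirichlet problem on the subdivision graph with boundary data `φ`
    (∀ v : V,
      f (Sum.inl v) - (1 / (G.deg v : ℂ)) * ∑ e ∈ (G.locFin v).toFinset, f (Sum.inr e)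
        = z * f (Sum.inl v)) ∧
    -- (ii) the Dirichlet-to-Neumann operator on the boundary `E` is given explicitly
    (∀ e : E,
      (f (Sum.inr e) - (f (Sum.inl (G.bd e).1) + f (Sum.inl (G.bd e).2)) / 2) - z * φ e
        = (1 - z) * φ e
          - (1 / (2 * (1 - z)))
            * ((1 / (G.deg (G.bd e).1 : ℂ)) * ∑ e' ∈ (G.locFin (G.bd e).1).toFinset, φ e'
              + (1 / (G.deg (G.bd e).2 : ℂ)) * ∑ e' ∈ (G.locFin (G.bd e).2).toFinset, φ e')) := by
  have hz' : (1 : ℂ) - z ≠ 0 := sub_ne_zero.mpr (Ne.symm hz)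
  have hd : ∀ v, (G.deg v : ℂ) ≠ 0 := fun v =>
    Nat.cast_ne_zero.mpr (Nat.one_le_iff_ne_zero.mp (hdeg v))
  have key : ∀ (d S : ℂ), d ≠ 0 →
      1 / ((1 - z) * d) * S - 1 / d * S = z * (1 / ((1 - z) * d) * S) := by
    intro d S hd0
    field_simp
    ring
  constructor
  · intro v
    simp only [hfV, hfE]
    exact key _ _ (hd _)
  · intro e
    simp only [hfV, hfE]
    set d1 := (G.deg (G.bd e).1 : ℂ)
    set d2 := (G.deg (G.bd e).2 : ℂ)
    set S1 := ∑ e' ∈ (G.locFin (G.bd e).1).toFinset, φ e'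
    set S2 := ∑ e' ∈ (G.locFin (G.bd e).2).toFinset, φ e'
    have h1 : 1 / ((1 - z) * d1) * S1 = (1 / (1 - z)) * (1 / d1 * S1) := by
      field_simp [hd (G.bd e).1]
    have h2 : 1 / ((1 - z) * d2) * S2 = (1 / (1 - z)) * (1 / d2 * S2) := by
      field_simp [hd (G.bd e).2]
    rw [h1, h2]
    generalize 1 / d1 * S1 = A
    generalize 1 / d2 * S2 = B
    field_simp
    ring
end

section
/- Let (V,E,∂) be a locally finite simple graph (the map e ↦ {∂₋e,∂₊e} is injective) which is r-regular (deg v = r for all v ∈ V) with r ≥ 2, and let z ∈ ℂ with z ≠ 1. Define Λ(z) : (E → ℂ) → (E → ℂ) by (Λ(z)φ)(e) := (1−z)·φ(e) − (1/(2(1−z)))·Σ_{v∈{∂₋e,∂₊e}} (1/r)·Σ_{e'∈E_v} φ(e') (the Dirichlet-to-Neumann operator of the subdivision graph with boundary E). Then Λ(z) = ((1−z) − (1−z)⁻¹)·id + ((r−1)/((1−z)·r))·Δ_{LG}, where Δ_{LG} is the normalised Laplacian of the line graph of (V,E,∂). -/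
/-- For an `r`-regular locally finite simple graph (`r ≥ 2`) and `z ≠ 1`,
the Dirichlet-to-Neumann operator of the subdivision graph with boundary `E`,
`(Λ(z)φ)(e) = (1−z)·φ(e) − (1/(2(1−z)))·Σ_{v=∂₋e,∂₊e} (1/r)·Σ_{e'∈E_v} φ(e')`,
equals `((1−z) − (1−z)⁻¹)·id + ((r−1)/((1−z)·r))·Δ_{LG}` where `Δ_{LG}` is the normalised
Laplacian of the line graph,
`(Δ_{LG}φ)(e) = φ(e) − (1/(2r−2))·Σ_{e'≠e sharing an endpoint with e} φ(e')`. -/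
theorem stmt6 {V E : Type*} [Countable V] [Countable E] [DecidableEq E]
    (G : LocallyFiniteGraph V E)
    (hsimple : Function.Injective fun e => ({(G.bd e).1, (G.bd e).2} : Set V))
    (r : ℕ) (hr : 2 ≤ r) (hreg : ∀ v, G.deg v = r)
    (z : ℂ) (hz : z ≠ 1) :
    ∀ (φ : E → ℂ) (e : E),
      (1 - z) * φ e
        - (1 / (2 * (1 - z)))
          * ((1 / (r : ℂ)) * ∑ e' ∈ (G.locFin (G.bd e).1).toFinset, φ e'
            + (1 / (r : ℂ)) * ∑ e' ∈ (G.locFin (G.bd e).2).toFinset, φ e')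
      = ((1 - z) - (1 - z)⁻¹) * φ e
        + (((r : ℂ) - 1) / ((1 - z) * (r : ℂ)))
          * (φ e - (1 / (2 * (r : ℂ) - 2))
              * ∑ e' ∈ ((G.locFin (G.bd e).1).toFinset ∪ (G.locFin (G.bd e).2).toFinset).erase e,
                  φ e') := by

  intro φ e
  set A := (G.locFin (G.bd e).1).toFinset with hA
  set B := (G.locFin (G.bd e).2).toFinset with hB
  have heA : e ∈ A := by simp [hA, Set.Finite.mem_toFinset]
  have heB : e ∈ B := by simp [hB, Set.Finite.mem_toFinset]
  have hinter : A ∩ B = {e} := by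
    ext e'
    simp only [Finset.mem_inter, Finset.mem_singleton, hA, hB, Set.Finite.mem_toFinset,
      Set.mem_setOf_eq]
    constructor
    · rintro ⟨h1, h2⟩
      apply hsimple
      have hne := G.no_loops e
      have hne' := G.no_loops e'
      simp only [Set.ext_iff, Set.mem_insert_iff, Set.mem_singleton_iff]
      intro x
      rcases h1 with h1 | h1 <;> rcases h2 with h2 | h2 <;>
        first
        | (exact absurd (h1.symm.trans h2) hne)
        | (constructor <;> rintro (rfl | rfl) <;> tauto)
    · rintro rfl
      exact ⟨Or.inl rfl, Or.inr rfl⟩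
  have hsum : ∑ e' ∈ (A ∪ B).erase e, φ e'
      = (∑ e' ∈ A, φ e') + (∑ e' ∈ B, φ e') - 2 * φ e := by
    have h1 : ∑ e' ∈ (A ∪ B).erase e, φ e' = (∑ e' ∈ A ∪ B, φ e') - φ e := by
      rw [eq_sub_iff_add_eq, Finset.sum_erase_add _ _ (Finset.mem_union_left _ heA)]
    have h2 : (∑ e' ∈ A ∪ B, φ e') + (∑ e' ∈ A ∩ B, φ e')
        = (∑ e' ∈ A, φ e') + (∑ e' ∈ B, φ e') := Finset.sum_union_inter
    rw [hinter, Finset.sum_singleton] at h2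
    rw [h1]; linear_combination h2
  rw [hsum]
  have hz1 : (1 : ℂ) - z ≠ 0 := sub_ne_zero.mpr (Ne.symm hz)
  have hr0 : (r : ℂ) ≠ 0 := Nat.cast_ne_zero.mpr (by omega)
  have hr2 : (2 : ℂ) * (r : ℂ) - 2 ≠ 0 := by
    intro h
    have h1 : (r : ℂ) = 1 := by linear_combination h / 2
    have : r = 1 := by exact_mod_cast h1
    omega
  have hr1 : (r : ℂ) - 1 ≠ 0 := by
    intro h; apply hr2; linear_combination 2 * h
  field_simp
  ring
end

section
/- Let (V,E,∂) be a finite simple graph (the map e ↦ {∂₋e,∂₊e} is injective, no loops) which is r-regular with r ≥ 2, let SG be its subdivision graph and LG its line graph, and let λ ∈ ℂ with λ ≠ 1. Then λ lies in the spectrum of the normalised Laplacian Δ_{SG} (an endomorphism of the finite-dimensional space of functions V ⊕ E → ℂ) if and only if (r/(r−1))·(1 − (1−λ)²) lies in the spectrum of the normalised Laplacian Δ_{LG} (an endomorphism of E → ℂ). -/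
/-- A finite graph: finite vertex set `V`, finite edge set `E`,
incidence map `bd e = (∂₋e, ∂₊e)`, no loops. -/
structure FiniteGraph (V E : Type*) [Fintype V] [Fintype E] where
  bd : E → V × V
  no_loops : ∀ e, (bd e).1 ≠ (bd e).2

variable {V E : Type*} [Fintype V] [Fintype E] [DecidableEq V] [DecidableEq E]

/-- The set of edges adjacent to a vertex. -/
def FiniteGraph.Ev (G : FiniteGraph V E) (v : V) : Finset E :=
  Finset.univ.filter fun e => (G.bd e).1 = v ∨ (G.bd e).2 = v

/-- The degree of a vertex. -/
def FiniteGraph.deg (G : FiniteGraph V E) (v : V) : ℕ := (G.Ev v).card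

/-- The normalised Laplacian of the subdivision graph `SG` of `G`, acting on functions
`V ⊕ E → ℂ` by `(Δ_{SG} g)(v) = g(v) − (1/deg v)·Σ_{e∈E_v} g(e)` and
`(Δ_{SG} g)(e) = g(e) − (g(∂₋e) + g(∂₊e))/2`. -/
noncomputable def FiniteGraph.DeltaSG (G : FiniteGraph V E) :
    Module.End ℂ ((V ⊕ E) → ℂ) where
  toFun g := Sum.elim
    (fun v => g (Sum.inl v) - (1 / (G.deg v : ℂ)) * ∑ e ∈ G.Ev v, g (Sum.inr e))
    (fun e => g (Sum.inr e) - (g (Sum.inl (G.bd e).1) + g (Sum.inl (G.bd e).2)) / 2)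
  map_add' g h := by
    funext x
    cases x with
    | inl v => simp [Finset.sum_add_distrib, mul_add]; ring
    | inr e => simp; ring
  map_smul' c g := by
    funext x
    cases x with
    | inl v => simp [mul_sub, Finset.mul_sum, mul_comm, mul_left_comm, mul_assoc]
    | inr e => simp; ring

/-- The normalised Laplacian of the line graph `LG` of an `r`-regular simple graph `G`,
acting on functions `E → ℂ` by
`(Δ_{LG} φ)(e) = φ(e) − (1/(2r−2))·Σ_{e'≠e sharing an endpoint with e} φ(e')`. -/
noncomputable def FiniteGraph.DeltaLG (G : FiniteGraph V E) (r : ℕ) :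
    Module.End ℂ (E → ℂ) where
  toFun φ := fun e => φ e -
    (1 / (2 * (r : ℂ) - 2)) * ∑ e' ∈ ((G.Ev (G.bd e).1 ∪ G.Ev (G.bd e).2).erase e), φ e'
  map_add' φ ψ := by
    funext e
    simp [Finset.sum_add_distrib, mul_add]
    ring
  map_smul' c φ := by
    funext e
    simp [mul_sub, Finset.mul_sum, mul_comm, mul_left_comm, mul_assoc]

section Aux

variable {V E : Type*} [Fintype V] [Fintype E] [DecidableEq V] [DecidableEq E]

lemma FiniteGraph.DeltaSG_apply_inl (G : FiniteGraph V E) (g : (V ⊕ E) → ℂ) (v : V) :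
    G.DeltaSG g (Sum.inl v) =
      g (Sum.inl v) - (1 / (G.deg v : ℂ)) * ∑ e ∈ G.Ev v, g (Sum.inr e) := rfl

lemma FiniteGraph.DeltaSG_apply_inr (G : FiniteGraph V E) (g : (V ⊕ E) → ℂ) (e : E) :
    G.DeltaSG g (Sum.inr e) =
      g (Sum.inr e) - (g (Sum.inl (G.bd e).1) + g (Sum.inl (G.bd e).2)) / 2 := rfl

lemma FiniteGraph.DeltaLG_apply (G : FiniteGraph V E) (r : ℕ) (φ : E → ℂ) (e : E) :
    G.DeltaLG r φ e = φ e - (1 / (2 * (r : ℂ) - 2)) *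
      ∑ e' ∈ ((G.Ev (G.bd e).1 ∪ G.Ev (G.bd e).2).erase e), φ e' := rfl

lemma FiniteGraph.mem_Ev (G : FiniteGraph V E) {v : V} {e : E} :
    e ∈ G.Ev v ↔ (G.bd e).1 = v ∨ (G.bd e).2 = v := by
  simp [FiniteGraph.Ev]

lemma FiniteGraph.Ev_inter (G : FiniteGraph V E)
    (hsimple : Function.Injective fun e => ({(G.bd e).1, (G.bd e).2} : Set V)) (e : E) :
    G.Ev (G.bd e).1 ∩ G.Ev (G.bd e).2 = {e} := by
  ext e'
  simp only [Finset.mem_inter, Finset.mem_singleton, FiniteGraph.mem_Ev]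
  constructor
  · rintro ⟨h1 | h1, h2 | h2⟩
    · exact absurd (h1.symm.trans h2) (G.no_loops e)
    · exact hsimple (by simp only [h1, h2])
    · refine hsimple ?_
      show ({(G.bd e').1, (G.bd e').2} : Set V) = {(G.bd e).1, (G.bd e).2}
      rw [h1, h2, Set.pair_comm]
    · exact absurd (h1.symm.trans h2) (G.no_loops e)
  · rintro rfl; exact ⟨Or.inl rfl, Or.inr rfl⟩

lemma FiniteGraph.sum_erase_eq (G : FiniteGraph V E)
    (hsimple : Function.Injective fun e => ({(G.bd e).1, (G.bd e).2} : Set V))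
    (e : E) (φ : E → ℂ) :
    ∑ e' ∈ (G.Ev (G.bd e).1 ∪ G.Ev (G.bd e).2).erase e, φ e' =
      (∑ e' ∈ G.Ev (G.bd e).1, φ e') + (∑ e' ∈ G.Ev (G.bd e).2, φ e') - 2 * φ e := by
  have he : e ∈ G.Ev (G.bd e).1 ∪ G.Ev (G.bd e).2 :=
    Finset.mem_union_left _ (G.mem_Ev.mpr (Or.inl rfl))
  have h1 := Finset.sum_union_inter (s₁ := G.Ev (G.bd e).1) (s₂ := G.Ev (G.bd e).2) (f := φ)
  rw [G.Ev_inter hsimple e, Finset.sum_singleton] at h1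
  rw [Finset.sum_erase_eq_sub he]
  linear_combination h1

lemma mem_spectrum_iff_exists {M : Type*} [AddCommGroup M] [Module ℂ M]
    [FiniteDimensional ℂ M] (f : Module.End ℂ M) (μ : ℂ) :
    μ ∈ spectrum ℂ f ↔ ∃ x, x ≠ 0 ∧ f x = μ • x := by
  rw [← Module.End.hasEigenvalue_iff_mem_spectrum]
  constructor
  · intro h
    obtain ⟨x, hx⟩ := h.exists_hasEigenvector
    exact ⟨x, hx.2, hx.apply_eq_smul⟩
  · rintro ⟨x, hx0, hx⟩
    exact Module.End.hasEigenvalue_of_hasEigenvector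
      ⟨Module.End.mem_eigenspace_iff.mpr hx, hx0⟩

end Aux
/-- For a finite `r`-regular simple graph (`r ≥ 2`) and `λ ≠ 1`:
`λ ∈ σ(Δ_{SG})` iff `(r/(r−1))·(1 − (1−λ)²) ∈ σ(Δ_{LG})`. -/
theorem stmt7 (G : FiniteGraph V E)
    (hsimple : Function.Injective fun e => ({(G.bd e).1, (G.bd e).2} : Set V))
    (r : ℕ) (hr : 2 ≤ r) (hreg : ∀ v, G.deg v = r)
    (lam : ℂ) (hlam : lam ≠ 1) :
    lam ∈ spectrum ℂ G.DeltaSG ↔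
      ((r : ℂ) / ((r : ℂ) - 1)) * (1 - (1 - lam) ^ 2) ∈ spectrum ℂ (G.DeltaLG r) := by
  have hμ : (1 : ℂ) - lam ≠ 0 := sub_ne_zero.mpr (Ne.symm hlam)
  have hrC : (r : ℂ) ≠ 0 := Nat.cast_ne_zero.mpr (by omega)
  have hr1 : (r : ℂ) - 1 ≠ 0 := by
    have : (r : ℂ) ≠ 1 := by exact_mod_cast (show r ≠ 1 by omega)
    exact sub_ne_zero.mpr this
  have h2r : 2 * (r : ℂ) - 2 ≠ 0 := by
    rw [show 2 * (r : ℂ) - 2 = 2 * ((r : ℂ) - 1) by ring]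
    exact mul_ne_zero two_ne_zero hr1
  rw [mem_spectrum_iff_exists, mem_spectrum_iff_exists]
  constructor
  · rintro ⟨g, hg0, hg⟩
    -- vertex equations
    have hv : ∀ v, ∑ e ∈ G.Ev v, g (Sum.inr e) = (r : ℂ) * (1 - lam) * g (Sum.inl v) := by
      intro v
      have h := congrFun hg (Sum.inl v)
      rw [FiniteGraph.DeltaSG_apply_inl, hreg v] at h
      simp only [Pi.smul_apply, smul_eq_mul] at h
      field_simp at h
      linear_combination -h
    -- edge equations
    have he : ∀ e, g (Sum.inl (G.bd e).1) + g (Sum.inl (G.bd e).2)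
        = 2 * (1 - lam) * g (Sum.inr e) := by
      intro e
      have h := congrFun hg (Sum.inr e)
      rw [FiniteGraph.DeltaSG_apply_inr] at h
      simp only [Pi.smul_apply, smul_eq_mul] at h
      linear_combination -2 * h
    refine ⟨fun e => g (Sum.inr e), ?_, ?_⟩
    · intro h0
      apply hg0
      funext x
      cases x with
      | inr e => exact congrFun h0 e
      | inl v =>
        have h := hv v
        have hz : ∑ e ∈ G.Ev v, g (Sum.inr e) = 0 :=
          Finset.sum_eq_zero fun e _ => congrFun h0 e
        rw [hz] at h
        have := (mul_eq_zero.mp h.symm).resolve_left (mul_ne_zero hrC hμ)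
        exact this
    · funext e
      rw [FiniteGraph.DeltaLG_apply, G.sum_erase_eq hsimple e, hv, hv]
      simp only [Pi.smul_apply, smul_eq_mul]
      have hkey : (r : ℂ) * (1 - lam) * g (Sum.inl (G.bd e).1)
          + (r : ℂ) * (1 - lam) * g (Sum.inl (G.bd e).2)
          = 2 * (r : ℂ) * (1 - lam) ^ 2 * g (Sum.inr e) := by
        linear_combination (r : ℂ) * (1 - lam) * he e
      field_simp
      linear_combination (-1 : ℂ) * hkey
  · rintro ⟨φ, hφ0, hφ⟩
    -- line graph equation ⇒ sum over the two stars
    have hsum : ∀ e, (∑ e' ∈ G.Ev (G.bd e).1, φ e') + (∑ e' ∈ G.Ev (G.bd e).2, φ e')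
        = 2 * (r : ℂ) * (1 - lam) ^ 2 * φ e := by
      intro e
      have h := congrFun hφ e
      rw [FiniteGraph.DeltaLG_apply, G.sum_erase_eq hsimple e] at h
      simp only [Pi.smul_apply, smul_eq_mul] at h
      field_simp at h
      refine mul_left_cancel₀ hr1 ?_
      linear_combination -((r : ℂ) - 1) * h
    refine ⟨Sum.elim (fun v => 1 / ((r : ℂ) * (1 - lam)) * ∑ e ∈ G.Ev v, φ e) φ, ?_, ?_⟩
    · intro h0
      apply hφ0
      funext e
      exact congrFun h0 (Sum.inr e)
    · funext x
      cases x with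
      | inl v =>
        rw [FiniteGraph.DeltaSG_apply_inl, hreg v]
        simp only [Pi.smul_apply, smul_eq_mul, Sum.elim_inl, Sum.elim_inr]
        field_simp
        ring
      | inr e =>
        rw [FiniteGraph.DeltaSG_apply_inr]
        simp only [Pi.smul_apply, smul_eq_mul, Sum.elim_inl, Sum.elim_inr]
        have h := hsum e
        field_simp
        linear_combination -h
end

section
/- Let (V,E,∂) be a locally finite graph carrying two vertex-coupling families of boundary maps with energy structures (H_v, ι_v, h_v) and (H̃_v, ι̃_v, h̃_v). Let δ > 0, let J¹_v : H¹_v → H̃¹_v and J'¹_v : H̃¹_v → H¹_v be bounded with sup_v ‖J¹_v‖ < ∞ and sup_v ‖J'¹_v‖ < ∞ and |h̃_v(J¹_v f, u) − h_v(f, J'¹_v u)| ≤ δ·‖f‖_{H¹_v}·‖u‖_{H̃¹_v} for all v, f ∈ H¹_v, u ∈ H̃¹_v. Let B and B̃ be smoothing operators for the coupled spaces H¹ and H̃¹ respectively, satisfying ‖B̃(J^{1,dec} f)‖_{H̃^{1,dec}} ≤ δ·‖f‖ for all f ∈ H¹ and ‖B(J'^{1,dec} u)‖_{H^{1,dec}}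 ≤ δ·‖u‖ for all u ∈ H̃¹, where J^{1,dec} := ⊕_v J¹_v and J'^{1,dec} := ⊕_v J'¹_v. Set J¹ := (id − B̃)∘J^{1,dec} and J'¹ := (id − B)∘J'^{1,dec}. Then the coupled energy forms are 3δ-close: |h̃(J¹ f, u) − h(f, J'¹ u)| ≤ 3δ·‖f‖_{H^{1,dec}}·‖u‖_{H̃^{1,dec}} for all f ∈ H¹ and u ∈ H̃¹, where h(f,g) := Σ_v h_v(f_v, g_v) and h̃(f,g) := Σ_v h̃_v(f_v, g_v). -/
open scoped InnerProductSpace ENNReal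

/-- Cauchy–Schwarz for the semidefinite form `⟪a,b⟫ - ⟪T a, T b⟫` with `T` a contraction. -/
lemma cs_energy_form {W W' : Type*} [NormedAddCommGroup W] [InnerProductSpace ℂ W]
    [NormedAddCommGroup W'] [InnerProductSpace ℂ W']
    (T : W →L[ℂ] W') (hT : ∀ x, ‖T x‖ ≤ ‖x‖) (a b : W) :
    ‖(⟪a, b⟫_ℂ - ⟪T a, T b⟫_ℂ)‖ ≤ ‖a‖ * ‖b‖ := by
  let c : PreInnerProductSpace.Core ℂ W :=
  { inner := fun x y => ⟪x, y⟫_ℂ - ⟪T x, T y⟫_ℂ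
    conj_inner_symm := fun x y => by
      simp only [map_sub, inner_conj_symm]
    re_inner_nonneg := fun x => by
      have h1 : ‖T x‖ ^ 2 ≤ ‖x‖ ^ 2 := by
        have := hT x; nlinarith [norm_nonneg (T x), norm_nonneg x]
      simp only [map_sub, inner_self_eq_norm_sq]
      linarith
    add_left := fun x y z => by
      simp only [inner_add_left, map_add]; ring
    smul_left := fun x y r => by
      simp only [inner_smul_left, map_smul]; ring }
  have key := @InnerProductSpace.Core.inner_mul_inner_self_le ℂ W _ _ _ c a b
  have hsymm : ‖@inner ℂ W c.toInner b a‖ = ‖@inner ℂ W c.toInner a b‖ := by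
    rw [← c.conj_inner_symm b a]
    exact RCLike.norm_conj _
  have hre1 : RCLike.re (@inner ℂ W c.toInner a a) ≤ ‖a‖ ^ 2 := by
    show RCLike.re (⟪a, a⟫_ℂ - ⟪T a, T a⟫_ℂ) ≤ _
    simp only [map_sub, inner_self_eq_norm_sq]
    nlinarith [norm_nonneg (T a)]
  have hre2 : RCLike.re (@inner ℂ W c.toInner b b) ≤ ‖b‖ ^ 2 := by
    show RCLike.re (⟪b, b⟫_ℂ - ⟪T b, T b⟫_ℂ) ≤ _
    simp only [map_sub, inner_self_eq_norm_sq]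
    nlinarith [norm_nonneg (T b)]
  have hnn1 : 0 ≤ RCLike.re (@inner ℂ W c.toInner a a) := c.re_inner_nonneg a
  have hnn2 : 0 ≤ RCLike.re (@inner ℂ W c.toInner b b) := c.re_inner_nonneg b
  have hab : ‖@inner ℂ W c.toInner a b‖ = ‖(⟪a, b⟫_ℂ - ⟪T a, T b⟫_ℂ)‖ := rfl
  rw [hsymm, hab] at key
  nlinarith [norm_nonneg (⟪a, b⟫_ℂ - ⟪T a, T b⟫_ℂ), norm_nonneg a, norm_nonneg b,
    mul_nonneg (norm_nonneg a) (norm_nonneg b)]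

/-- ℓ²-Cauchy–Schwarz for two (possibly different) families. -/
lemma l2_cs {V : Type*} {E1 E2 : V → Type*} [∀ v, NormedAddCommGroup (E1 v)]
    [∀ v, NormedAddCommGroup (E2 v)] (f : lp E1 2) (g : lp E2 2) :
    Summable (fun v => ‖f v‖ * ‖g v‖) ∧ ∑' v, ‖f v‖ * ‖g v‖ ≤ ‖f‖ * ‖g‖ := by
  have h2 : (0:ℝ) < (2:ℝ≥0∞).toReal := by norm_num
  have hconj : ((2:ℝ≥0∞)).toReal.HolderConjugate ((2:ℝ≥0∞)).toReal := by
    constructor <;> norm_num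
  have hfm : Memℓp (fun v => ‖f v‖) (2:ℝ≥0∞) := by
    apply memℓp_gen
    simpa using ((lp.memℓp f).summable h2)
  have hgm : Memℓp (fun v => ‖g v‖) (2:ℝ≥0∞) := by
    apply memℓp_gen
    simpa using ((lp.memℓp g).summable h2)
  let F : lp (fun _ : V => ℝ) 2 := ⟨fun v => ‖f v‖, hfm⟩
  let Gg : lp (fun _ : V => ℝ) 2 := ⟨fun v => ‖g v‖, hgm⟩
  have hF : ‖F‖ = ‖f‖ := by
    rw [lp.norm_eq_tsum_rpow h2, lp.norm_eq_tsum_rpow h2]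
    congr 1
    apply tsum_congr; intro v
    congr 1
    show ‖‖f v‖‖ = ‖f v‖
    exact norm_norm _
  have hG : ‖Gg‖ = ‖g‖ := by
    rw [lp.norm_eq_tsum_rpow h2, lp.norm_eq_tsum_rpow h2]
    congr 1
    apply tsum_congr; intro v
    congr 1
    show ‖‖g v‖‖ = ‖g v‖
    exact norm_norm _
  have key := lp.tsum_mul_le_mul_norm hconj F Gg
  have heq : (fun v => ‖F v‖ * ‖Gg v‖) = fun v => ‖f v‖ * ‖g v‖ := by
    funext v
    show ‖‖f v‖‖ * ‖‖g v‖‖ = _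
    rw [norm_norm, norm_norm]
  rw [heq, hF, hG] at key
  exact key

/-- Two vertex-coupling families with energy structures, the energy
forms `h_v(f,g) = ⟪f,g⟫_{H¹_v} − ⟪ι_v f, ι_v g⟫_{H_v}` being `δ`-close via `J¹_v`, `J'¹_v`,
and smoothing operators `B`, `B̃` with `‖B̃(J^{1,dec}f)‖ ≤ δ‖f‖`, `‖B(J'^{1,dec}u)‖ ≤ δ‖u‖`.
Then the coupled energy forms are `3δ`-close:
`|h̃(J¹f, u) − h(f, J'¹u)| ≤ 3δ‖f‖‖u‖` for `f ∈ H¹`, `u ∈ H̃¹`, where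
`J¹ = (id − B̃)∘J^{1,dec}` and `J'¹ = (id − B)∘J'^{1,dec}`. -/
theorem stmt14 {V E : Type*} [Countable V] [Countable E]
    (G : LocallyFiniteGraph V E)
    -- first coupling family with energy structure
    (H1 : V → Type*) [∀ v, NormedAddCommGroup (H1 v)] [∀ v, InnerProductSpace ℂ (H1 v)]
    [∀ v, CompleteSpace (H1 v)]
    (Gb : E → Type*) [∀ e, NormedAddCommGroup (Gb e)] [∀ e, InnerProductSpace ℂ (Gb e)]
    [∀ e, CompleteSpace (Gb e)]
    (Hv : V → Type*) [∀ v, NormedAddCommGroup (Hv v)] [∀ v, InnerProductSpace ℂ (Hv v)]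
    [∀ v, CompleteSpace (Hv v)]
    (Γ : ∀ v, ∀ e, H1 v →L[ℂ] Gb e) (c : ℝ)
    (hc : ∀ v, ∀ f : H1 v,
      ∑ e ∈ (G.locFin v).toFinset, ‖Γ v e f‖ ^ 2 ≤ c ^ 2 * ‖f‖ ^ 2)
    (ι : ∀ v, H1 v →L[ℂ] Hv v)
    (hι_inj : ∀ v, Function.Injective (ι v))
    (hι_contr : ∀ v, ∀ f : H1 v, ‖ι v f‖ ≤ ‖f‖)
    -- second (tilde) coupling family with energy structure
    (H1t : V → Type*) [∀ v, NormedAddCommGroup (H1t v)] [∀ v, InnerProductSpace ℂ (H1t v)]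
    [∀ v, CompleteSpace (H1t v)]
    (Gbt : E → Type*) [∀ e, NormedAddCommGroup (Gbt e)] [∀ e, InnerProductSpace ℂ (Gbt e)]
    [∀ e, CompleteSpace (Gbt e)]
    (Hvt : V → Type*) [∀ v, NormedAddCommGroup (Hvt v)] [∀ v, InnerProductSpace ℂ (Hvt v)]
    [∀ v, CompleteSpace (Hvt v)]
    (Γt : ∀ v, ∀ e, H1t v →L[ℂ] Gbt e) (ct : ℝ)
    (hct : ∀ v, ∀ u : H1t v,
      ∑ e ∈ (G.locFin v).toFinset, ‖Γt v e u‖ ^ 2 ≤ ct ^ 2 * ‖u‖ ^ 2)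
    (ιt : ∀ v, H1t v →L[ℂ] Hvt v)
    (hιt_inj : ∀ v, Function.Injective (ιt v))
    (hιt_contr : ∀ v, ∀ u : H1t v, ‖ιt v u‖ ≤ ‖u‖)
    -- componentwise identification operators and their ℓ²-direct sums
    (J1 : ∀ v, H1 v →L[ℂ] H1t v) (cJ1 : ℝ) (hJ1 : ∀ v, ‖J1 v‖ ≤ cJ1)
    (J'1 : ∀ v, H1t v →L[ℂ] H1 v) (cJ'1 : ℝ) (hJ'1 : ∀ v, ‖J'1 v‖ ≤ cJ'1)
    (Jdec : lp H1 2 →L[ℂ] lp H1t 2)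
    (hJdec : ∀ (f : lp H1 2) (v : V), Jdec f v = J1 v (f v))
    (J'dec : lp H1t 2 →L[ℂ] lp H1 2)
    (hJ'dec : ∀ (u : lp H1t 2) (v : V), J'dec u v = J'1 v (u v))
    (δ : ℝ) (hδ : 0 < δ)
    -- `δ`-closeness of the building-block energy forms
    (hclose : ∀ v, ∀ (f : H1 v) (u : H1t v),
      ‖((⟪J1 v f, u⟫_ℂ - ⟪ιt v (J1 v f), ιt v u⟫_ℂ)
          - (⟪f, J'1 v u⟫_ℂ - ⟪ι v f, ι v (J'1 v u)⟫_ℂ))‖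
        ≤ δ * ‖f‖ * ‖u‖)
    -- smoothing operators for the two coupled spaces
    (B : lp H1 2 →L[ℂ] lp H1 2)
    (hB_smooth : ∀ f : lp H1 2, ∀ e,
      Γ (G.bd e).1 e ((f - B f) (G.bd e).1) = Γ (G.bd e).2 e ((f - B f) (G.bd e).2))
    (Bt : lp H1t 2 →L[ℂ] lp H1t 2)
    (hBt_smooth : ∀ u : lp H1t 2, ∀ e,
      Γt (G.bd e).1 e ((u - Bt u) (G.bd e).1) = Γt (G.bd e).2 e ((u - Bt u) (G.bd e).2))
    (hBt_small : ∀ f : lp H1 2,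
      (∀ e, Γ (G.bd e).1 e (f (G.bd e).1) = Γ (G.bd e).2 e (f (G.bd e).2)) →
      ‖Bt (Jdec f)‖ ≤ δ * ‖f‖)
    (hB_small : ∀ u : lp H1t 2,
      (∀ e, Γt (G.bd e).1 e (u (G.bd e).1) = Γt (G.bd e).2 e (u (G.bd e).2)) →
      ‖B (J'dec u)‖ ≤ δ * ‖u‖) :
    ∀ f : lp H1 2,
      (∀ e, Γ (G.bd e).1 e (f (G.bd e).1) = Γ (G.bd e).2 e (f (G.bd e).2)) →
      ∀ u : lp H1t 2,
        (∀ e, Γt (G.bd e).1 e (u (G.bd e).1) = Γt (G.bd e).2 e (u (G.bd e).2)) →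
        ‖
          ((∑' v, (⟪(Jdec f - Bt (Jdec f)) v, u v⟫_ℂ
              - ⟪ιt v ((Jdec f - Bt (Jdec f)) v), ιt v (u v)⟫_ℂ))
            - ∑' v, (⟪f v, (J'dec u - B (J'dec u)) v⟫_ℂ
              - ⟪ι v (f v), ι v ((J'dec u - B (J'dec u)) v)⟫_ℂ))‖
          ≤ 3 * δ * ‖f‖ * ‖u‖ := by
  intro f hf u hu
  set F : lp H1t 2 := Jdec f with hFdef
  set P : lp H1 2 := J'dec u with hPdef
  have hsub1 : ∀ (x : lp H1t 2) (v : V), (F - x) v = F v - x v := by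
    intro x v; simp [lp.coeFn_sub]
  have hsub2 : ∀ (y : lp H1 2) (v : V), (P - y) v = P v - y v := by
    intro y v; simp [lp.coeFn_sub]
  have cs_t : ∀ v (a b : H1t v), ‖(⟪a, b⟫_ℂ - ⟪ιt v a, ιt v b⟫_ℂ)‖ ≤ ‖a‖ * ‖b‖ :=
    fun v => cs_energy_form (ιt v) (hιt_contr v)
  have cs_s : ∀ v (a b : H1 v), ‖(⟪a, b⟫_ℂ - ⟪ι v a, ι v b⟫_ℂ)‖ ≤ ‖a‖ * ‖b‖ :=
    fun v => cs_energy_form (ι v) (hι_contr v)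
  have sumt : ∀ x : lp H1t 2,
      Summable (fun v => ⟪x v, u v⟫_ℂ - ⟪ιt v (x v), ιt v (u v)⟫_ℂ) := by
    intro x
    exact Summable.of_norm_bounded (l2_cs x u).1 (fun v => cs_t v _ _)
  have sums : ∀ y : lp H1 2,
      Summable (fun v => ⟪f v, y v⟫_ℂ - ⟪ι v (f v), ι v (y v)⟫_ℂ) := by
    intro y
    exact Summable.of_norm_bounded (l2_cs f y).1 (fun v => cs_s v _ _)
  have normt : ∀ x : lp H1t 2,
      ‖∑' v, (⟪x v, u v⟫_ℂ - ⟪ιt v (x v), ιt v (u v)⟫_ℂ)‖ ≤ ‖x‖ * ‖u‖ := by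
    intro x
    have hs : Summable (fun v => ‖(⟪x v, u v⟫_ℂ - ⟪ιt v (x v), ιt v (u v)⟫_ℂ)‖) :=
      Summable.of_nonneg_of_le (fun v => norm_nonneg _) (fun v => cs_t v _ _) (l2_cs x u).1
    calc ‖∑' v, (⟪x v, u v⟫_ℂ - ⟪ιt v (x v), ιt v (u v)⟫_ℂ)‖
        ≤ ∑' v, ‖(⟪x v, u v⟫_ℂ - ⟪ιt v (x v), ιt v (u v)⟫_ℂ)‖ := norm_tsum_le_tsum_norm hs
      _ ≤ ∑' v, ‖x v‖ * ‖u v‖ := Summable.tsum_le_tsum (fun v => cs_t v _ _) hs (l2_cs x u).1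
      _ ≤ ‖x‖ * ‖u‖ := (l2_cs x u).2
  have norms : ∀ y : lp H1 2,
      ‖∑' v, (⟪f v, y v⟫_ℂ - ⟪ι v (f v), ι v (y v)⟫_ℂ)‖ ≤ ‖f‖ * ‖y‖ := by
    intro y
    have hs : Summable (fun v => ‖(⟪f v, y v⟫_ℂ - ⟪ι v (f v), ι v (y v)⟫_ℂ)‖) :=
      Summable.of_nonneg_of_le (fun v => norm_nonneg _) (fun v => cs_s v _ _) (l2_cs f y).1
    calc ‖∑' v, (⟪f v, y v⟫_ℂ - ⟪ι v (f v), ι v (y v)⟫_ℂ)‖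
        ≤ ∑' v, ‖(⟪f v, y v⟫_ℂ - ⟪ι v (f v), ι v (y v)⟫_ℂ)‖ := norm_tsum_le_tsum_norm hs
      _ ≤ ∑' v, ‖f v‖ * ‖y v‖ := Summable.tsum_le_tsum (fun v => cs_s v _ _) hs (l2_cs f y).1
      _ ≤ ‖f‖ * ‖y‖ := (l2_cs f y).2
  have e1 : (∑' v, (⟪(F - Bt F) v, u v⟫_ℂ - ⟪ιt v ((F - Bt F) v), ιt v (u v)⟫_ℂ))
      = (∑' v, (⟪F v, u v⟫_ℂ - ⟪ιt v (F v), ιt v (u v)⟫_ℂ))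
        - ∑' v, (⟪(Bt F) v, u v⟫_ℂ - ⟪ιt v ((Bt F) v), ιt v (u v)⟫_ℂ) := by
    rw [← Summable.tsum_sub (sumt F) (sumt (Bt F))]
    apply tsum_congr; intro v
    rw [hsub1 (Bt F) v]
    simp only [inner_sub_left, map_sub]
    ring
  have e2 : (∑' v, (⟪f v, (P - B P) v⟫_ℂ - ⟪ι v (f v), ι v ((P - B P) v)⟫_ℂ))
      = (∑' v, (⟪f v, P v⟫_ℂ - ⟪ι v (f v), ι v (P v)⟫_ℂ))
        - ∑' v, (⟪f v, (B P) v⟫_ℂ - ⟪ι v (f v), ι v ((B P) v)⟫_ℂ) := by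
    rw [← Summable.tsum_sub (sums P) (sums (B P))]
    apply tsum_congr; intro v
    rw [hsub2 (B P) v]
    simp only [inner_sub_right, map_sub]
    ring
  rw [e1, e2]
  set A1 := ∑' v, (⟪F v, u v⟫_ℂ - ⟪ιt v (F v), ιt v (u v)⟫_ℂ) with hA1
  set A2 := ∑' v, (⟪(Bt F) v, u v⟫_ℂ - ⟪ιt v ((Bt F) v), ιt v (u v)⟫_ℂ) with hA2
  set B1 := ∑' v, (⟪f v, P v⟫_ℂ - ⟪ι v (f v), ι v (P v)⟫_ℂ) with hB1
  set B2 := ∑' v, (⟪f v, (B P) v⟫_ℂ - ⟪ι v (f v), ι v ((B P) v)⟫_ℂ) with hB2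
  have hD : ‖A1 - B1‖ ≤ δ * (‖f‖ * ‖u‖) := by
    rw [hA1, hB1, ← Summable.tsum_sub (sumt F) (sums P)]
    have hbd : ∀ v, ‖(⟪F v, u v⟫_ℂ - ⟪ιt v (F v), ιt v (u v)⟫_ℂ)
        - (⟪f v, P v⟫_ℂ - ⟪ι v (f v), ι v (P v)⟫_ℂ)‖ ≤ δ * ‖f v‖ * ‖u v‖ := by
      intro v
      have h1 : F v = J1 v (f v) := hJdec f v
      have h2 : P v = J'1 v (u v) := hJ'dec u v
      rw [h1, h2]
      exact hclose v (f v) (u v)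
    have hsummul : Summable (fun v => δ * ‖f v‖ * ‖u v‖) := by
      have := (l2_cs f u).1.mul_left δ
      simpa [mul_assoc] using this
    have hsD : Summable (fun v => (⟪F v, u v⟫_ℂ - ⟪ιt v (F v), ιt v (u v)⟫_ℂ)
        - (⟪f v, P v⟫_ℂ - ⟪ι v (f v), ι v (P v)⟫_ℂ)) := (sumt F).sub (sums P)
    have hsN : Summable (fun v => ‖(⟪F v, u v⟫_ℂ - ⟪ιt v (F v), ιt v (u v)⟫_ℂ)
        - (⟪f v, P v⟫_ℂ - ⟪ι v (f v), ι v (P v)⟫_ℂ)‖) :=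
      Summable.of_nonneg_of_le (fun v => norm_nonneg _) hbd hsummul
    calc ‖∑' v, ((⟪F v, u v⟫_ℂ - ⟪ιt v (F v), ιt v (u v)⟫_ℂ)
          - (⟪f v, P v⟫_ℂ - ⟪ι v (f v), ι v (P v)⟫_ℂ))‖
        ≤ ∑' v, ‖(⟪F v, u v⟫_ℂ - ⟪ιt v (F v), ιt v (u v)⟫_ℂ)
          - (⟪f v, P v⟫_ℂ - ⟪ι v (f v), ι v (P v)⟫_ℂ)‖ := norm_tsum_le_tsum_norm hsN
      _ ≤ ∑' v, δ * ‖f v‖ * ‖u v‖ := Summable.tsum_le_tsum hbd hsN hsummul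
      _ = δ * ∑' v, ‖f v‖ * ‖u v‖ := by
          rw [← tsum_mul_left]; apply tsum_congr; intro v; ring
      _ ≤ δ * (‖f‖ * ‖u‖) := by
          have := (l2_cs f u).2
          exact mul_le_mul_of_nonneg_left this (le_of_lt hδ)
  have hA2b : ‖A2‖ ≤ δ * ‖f‖ * ‖u‖ := by
    have h1 : ‖A2‖ ≤ ‖Bt F‖ * ‖u‖ := normt (Bt F)
    have h2 : ‖Bt F‖ ≤ δ * ‖f‖ := hBt_small f hf
    calc ‖A2‖ ≤ ‖Bt F‖ * ‖u‖ := h1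
      _ ≤ (δ * ‖f‖) * ‖u‖ := mul_le_mul_of_nonneg_right h2 (norm_nonneg u)
      _ = δ * ‖f‖ * ‖u‖ := by ring
  have hB2b : ‖B2‖ ≤ δ * ‖f‖ * ‖u‖ := by
    have h1 : ‖B2‖ ≤ ‖f‖ * ‖B P‖ := norms (B P)
    have h2 : ‖B P‖ ≤ δ * ‖u‖ := hB_small u hu
    calc ‖B2‖ ≤ ‖f‖ * ‖B P‖ := h1
      _ ≤ ‖f‖ * (δ * ‖u‖) := mul_le_mul_of_nonneg_left h2 (norm_nonneg f)
      _ = δ * ‖f‖ * ‖u‖ := by ring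
  have hsplit : (A1 - A2) - (B1 - B2) = ((A1 - B1) - A2) + B2 := by ring
  rw [hsplit]
  calc ‖((A1 - B1) - A2) + B2‖ ≤ ‖(A1 - B1) - A2‖ + ‖B2‖ := norm_add_le _ _
    _ ≤ (‖A1 - B1‖ + ‖A2‖) + ‖B2‖ := by
        exact add_le_add (norm_sub_le _ _) le_rfl
    _ ≤ (δ * (‖f‖ * ‖u‖) + δ * ‖f‖ * ‖u‖) + δ * ‖f‖ * ‖u‖ := by
        exact add_le_add (add_le_add hD hA2b) hB2b
    _ = 3 * δ * ‖f‖ * ‖u‖ := by ring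
end

section
/- Let (V,E,∂) be a locally finite graph carrying two vertex-coupling families of boundary maps Γ_{v,e} : H¹_v → G_e and Γ̃_{v,e} : H̃¹_v → G̃_e, with c̃² := sup_v ‖u ↦ (Γ̃_{v,e}u)_{e∈E_v}‖² < ∞. Let δ > 0, let J¹_v : H¹_v → H̃¹_v be bounded with sup_v ‖J¹_v‖ < ∞, let I_e : G_e → G̃_e be bounded with sup_e ‖I_e‖ < ∞, and assume Σ_{e∈E_v} ‖(I_e ∘ Γ_{v,e} − Γ̃_{v,e} ∘ J¹_v) f_v‖²_{G̃_e} ≤ δ²·‖f_v‖²_{H¹_v} for every v ∈ V and f_v ∈ H¹_v. Let B̃ be a smoothing operator for the coupled space H̃¹ with ‖B̃(J^{1,dec} f)‖_{H̃^{1,dec}} ≤ δ·‖f‖ for all f ∈ H¹, and set J¹ := (id − B̃)∘J^{1,dec} with J^{1,dec} := ⊕_v J¹_v. Then the coupled boundary maps are close: for every f ∈ H¹, ‖I(Γ f) − Γ̃(J¹ f)‖_{⊕_e G̃_e} ≤ δ·√(1 + c̃²)·‖f‖_{H^{1,dec}}, where (Iφ)_e := I_e φ_e. -/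
open scoped ENNReal

set_option maxHeartbeats 1000000 in
/-- Two vertex-coupling families with
`c̃² = sup_v ‖(Γ̃_{v,e})_{e∈E_v}‖² < ∞`, identification operators `J¹_v`, `I_e` with
`Σ_{e∈E_v} ‖(I_eΓ_{v,e} − Γ̃_{v,e}J¹_v)f_v‖² ≤ δ²‖f_v‖²`, and a smoothing operator `B̃`
with `‖B̃(J^{1,dec}f)‖ ≤ δ‖f‖` on `H¹`.  Then the coupled boundary maps are close:
`‖I(Γf) − Γ̃(J¹f)‖ ≤ δ·√(1+c̃²)·‖f‖` for every `f ∈ H¹` (stated squared, as a bound on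
the ℓ²-sum over the edges), where `J¹ = (id − B̃)∘J^{1,dec}`. -/
theorem stmt15 {V E : Type*} [Countable V] [Countable E]
    (G : LocallyFiniteGraph V E)
    (H1 : V → Type*) [∀ v, NormedAddCommGroup (H1 v)] [∀ v, InnerProductSpace ℂ (H1 v)]
    [∀ v, CompleteSpace (H1 v)]
    (Gb : E → Type*) [∀ e, NormedAddCommGroup (Gb e)] [∀ e, InnerProductSpace ℂ (Gb e)]
    [∀ e, CompleteSpace (Gb e)]
    (H1t : V → Type*) [∀ v, NormedAddCommGroup (H1t v)] [∀ v, InnerProductSpace ℂ (H1t v)]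
    [∀ v, CompleteSpace (H1t v)]
    (Gbt : E → Type*) [∀ e, NormedAddCommGroup (Gbt e)] [∀ e, InnerProductSpace ℂ (Gbt e)]
    [∀ e, CompleteSpace (Gbt e)]
    (Γ : ∀ v, ∀ e, H1 v →L[ℂ] Gb e) (c : ℝ)
    (hc : ∀ v, ∀ f : H1 v,
      ∑ e ∈ (G.locFin v).toFinset, ‖Γ v e f‖ ^ 2 ≤ c ^ 2 * ‖f‖ ^ 2)
    (Γt : ∀ v, ∀ e, H1t v →L[ℂ] Gbt e) (ct : ℝ)
    (hct : ∀ v, ∀ u : H1t v,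
      ∑ e ∈ (G.locFin v).toFinset, ‖Γt v e u‖ ^ 2 ≤ ct ^ 2 * ‖u‖ ^ 2)
    -- identification operators
    (J1 : ∀ v, H1 v →L[ℂ] H1t v) (cJ1 : ℝ) (hJ1 : ∀ v, ‖J1 v‖ ≤ cJ1)
    (I : ∀ e, Gb e →L[ℂ] Gbt e) (cI : ℝ) (hI : ∀ e, ‖I e‖ ≤ cI)
    (Jdec : lp H1 2 →L[ℂ] lp H1t 2)
    (hJdec : ∀ (f : lp H1 2) (v : V), Jdec f v = J1 v (f v))
    (δ : ℝ) (hδ : 0 < δ)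
    (hclose : ∀ v, ∀ fv : H1 v,
      ∑ e ∈ (G.locFin v).toFinset, ‖I e (Γ v e fv) - Γt v e (J1 v fv)‖ ^ 2
        ≤ δ ^ 2 * ‖fv‖ ^ 2)
    -- the smoothing operator `B̃` for the tilde coupled space
    (Bt : lp H1t 2 →L[ℂ] lp H1t 2)
    (hBt_smooth : ∀ u : lp H1t 2, ∀ e,
      Γt (G.bd e).1 e ((u - Bt u) (G.bd e).1) = Γt (G.bd e).2 e ((u - Bt u) (G.bd e).2))
    (hBt_small : ∀ f : lp H1 2,
      (∀ e, Γ (G.bd e).1 e (f (G.bd e).1) = Γ (G.bd e).2 e (f (G.bd e).2)) →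
      ‖Bt (Jdec f)‖ ≤ δ * ‖f‖) :
    ∀ f : lp H1 2,
      (∀ e, Γ (G.bd e).1 e (f (G.bd e).1) = Γ (G.bd e).2 e (f (G.bd e).2)) →
      (Summable fun e =>
        ‖I e (Γ (G.bd e).1 e (f (G.bd e).1))
          - Γt (G.bd e).1 e ((Jdec f - Bt (Jdec f)) (G.bd e).1)‖ ^ 2) ∧
      ∑' e, ‖I e (Γ (G.bd e).1 e (f (G.bd e).1))
          - Γt (G.bd e).1 e ((Jdec f - Bt (Jdec f)) (G.bd e).1)‖ ^ 2
        ≤ δ ^ 2 * (1 + ct ^ 2) * ‖f‖ ^ 2 := by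

  intro f hf
  classical
  set T : V → E → ℝ := fun v e =>
    ‖I e (Γ v e (f v)) - Γt v e ((Jdec f - Bt (Jdec f)) v)‖ ^ 2 with hTdef
  have hTnn : ∀ v e, 0 ≤ T v e := fun v e => sq_nonneg _
  -- norms as sums of squares
  have hpow : ∀ x : ℝ, x ^ ((2 : ℝ≥0∞).toReal) = x ^ (2 : ℕ) := by
    intro x
    rw [show ((2 : ℝ≥0∞).toReal) = ((2 : ℕ) : ℝ) by norm_num, Real.rpow_natCast]
  have hfs : HasSum (fun v => ‖f v‖ ^ 2) (‖f‖ ^ 2) := by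
    have h := lp.hasSum_norm (by norm_num : 0 < (2 : ℝ≥0∞).toReal) f
    simpa only [hpow] using h
  have hws : HasSum (fun v => ‖Bt (Jdec f) v‖ ^ 2) (‖Bt (Jdec f)‖ ^ 2) := by
    have h := lp.hasSum_norm (by norm_num : 0 < (2 : ℝ≥0∞).toReal) (Bt (Jdec f))
    simpa only [hpow] using h
  -- coordinates of the smoothed function
  have hcoord : ∀ v : V, (Jdec f - Bt (Jdec f)) v = J1 v (f v) - Bt (Jdec f) v := by
    intro v
    simp only [lp.coeFn_sub, Pi.sub_apply, hJdec]
  -- rewrite T as a sum of two terms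
  have hT2 : ∀ v e, T v e =
      ‖(I e (Γ v e (f v)) - Γt v e (J1 v (f v))) + Γt v e (Bt (Jdec f) v)‖ ^ 2 := by
    intro v e
    simp only [hTdef]
    rw [hcoord v, map_sub]
    congr 1
    abel
  -- edge symmetry : the value of T is the same at both endpoints of an edge
  have hsym : ∀ e, T (G.bd e).1 e = T (G.bd e).2 e := by
    intro e
    simp only [hTdef]
    rw [hf e, hBt_smooth (Jdec f) e]
  -- per-vertex estimate
  have key : ∀ v, ∑ e ∈ (G.locFin v).toFinset, T v e
      ≤ (1 + ct ^ 2) * (δ ^ 2 * ‖f v‖ ^ 2 + ‖Bt (Jdec f) v‖ ^ 2) := by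
    intro v
    have hA := hclose v (f v)
    have hB := hct v (Bt (Jdec f) v)
    set s := (G.locFin v).toFinset with hs
    set a : ∀ e, Gbt e := fun e => I e (Γ v e (f v)) - Γt v e (J1 v (f v)) with ha
    set b : ∀ e, Gbt e := fun e => Γt v e (Bt (Jdec f) v) with hb
    have hAnn : (0:ℝ) ≤ ∑ e ∈ s, ‖a e‖ ^ 2 := Finset.sum_nonneg fun e _ => sq_nonneg _
    have hBnn : (0:ℝ) ≤ ∑ e ∈ s, ‖b e‖ ^ 2 := Finset.sum_nonneg fun e _ => sq_nonneg _
    have hCnn : (0:ℝ) ≤ ∑ e ∈ s, ‖a e‖ * ‖b e‖ :=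
      Finset.sum_nonneg fun e _ => mul_nonneg (norm_nonneg _) (norm_nonneg _)
    have hCS : (∑ e ∈ s, ‖a e‖ * ‖b e‖) ^ 2
        ≤ (∑ e ∈ s, ‖a e‖ ^ 2) * (∑ e ∈ s, ‖b e‖ ^ 2) :=
      Finset.sum_mul_sq_le_sq_mul_sq s _ _
    have hXnn : (0:ℝ) ≤ δ * ‖f v‖ * (|ct| * ‖Bt (Jdec f) v‖) := by positivity
    have hX2 : ((∑ e ∈ s, ‖a e‖ * ‖b e‖) : ℝ) ^ 2
        ≤ (δ * ‖f v‖ * (|ct| * ‖Bt (Jdec f) v‖)) ^ 2 := by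
      calc (∑ e ∈ s, ‖a e‖ * ‖b e‖) ^ 2
          ≤ (∑ e ∈ s, ‖a e‖ ^ 2) * (∑ e ∈ s, ‖b e‖ ^ 2) := hCS
        _ ≤ (δ ^ 2 * ‖f v‖ ^ 2) * (ct ^ 2 * ‖Bt (Jdec f) v‖ ^ 2) := by
            apply mul_le_mul hA hB hBnn (by positivity)
        _ = (δ * ‖f v‖ * (|ct| * ‖Bt (Jdec f) v‖)) ^ 2 := by
            rw [mul_pow, mul_pow, mul_pow, sq_abs]
    have hC : (∑ e ∈ s, ‖a e‖ * ‖b e‖)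
        ≤ δ * ‖f v‖ * (|ct| * ‖Bt (Jdec f) v‖) := by
      nlinarith [hX2, hCnn, hXnn]
    have hsum1 : ∑ e ∈ s, T v e
        ≤ (∑ e ∈ s, ‖a e‖ ^ 2) + 2 * (∑ e ∈ s, ‖a e‖ * ‖b e‖) + (∑ e ∈ s, ‖b e‖ ^ 2) := by
      have hle : ∀ e ∈ s, T v e ≤ ‖a e‖ ^ 2 + 2 * (‖a e‖ * ‖b e‖) + ‖b e‖ ^ 2 := by
        intro e _
        rw [hT2 v e]
        have htri : ‖a e + b e‖ ≤ ‖a e‖ + ‖b e‖ := norm_add_le _ _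
        nlinarith [norm_nonneg (a e + b e), norm_nonneg (a e), norm_nonneg (b e)]
      calc ∑ e ∈ s, T v e
          ≤ ∑ e ∈ s, (‖a e‖ ^ 2 + 2 * (‖a e‖ * ‖b e‖) + ‖b e‖ ^ 2) :=
            Finset.sum_le_sum hle
        _ = _ := by rw [Finset.sum_add_distrib, Finset.sum_add_distrib, ← Finset.mul_sum]
    have habs : |ct| ^ 2 = ct ^ 2 := sq_abs ct
    have hred : ∑ e ∈ s, T v e ≤ δ ^ 2 * ‖f v‖ ^ 2
        + 2 * (δ * ‖f v‖ * (|ct| * ‖Bt (Jdec f) v‖)) + ct ^ 2 * ‖Bt (Jdec f) v‖ ^ 2 := by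
      linarith [hsum1, hA, hB, hC]
    nlinarith [hred, sq_nonneg (|ct| * (δ * ‖f v‖) - ‖Bt (Jdec f) v‖), habs]
  -- the three functions on V × E
  set g1 : V × E → ℝ := fun p => if (G.bd p.2).1 = p.1 then T p.1 p.2 else 0 with hg1def
  set g2 : V × E → ℝ := fun p => if (G.bd p.2).2 = p.1 then T p.1 p.2 else 0 with hg2def
  set gg : V × E → ℝ := fun p => if p.2 ∈ (G.locFin p.1).toFinset then T p.1 p.2 else 0
    with hggdef
  have hg1nn : ∀ p, 0 ≤ g1 p := by
    intro p; simp only [hg1def]; split <;> simp [hTnn]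
  have hg2nn : ∀ p, 0 ≤ g2 p := by
    intro p; simp only [hg2def]; split <;> simp [hTnn]
  have hggnn : ∀ p, 0 ≤ gg p := by
    intro p; simp only [hggdef]; split <;> simp [hTnn]
  have hg_eq : ∀ p, gg p = g1 p + g2 p := by
    intro p
    by_cases hA : (G.bd p.2).1 = p.1 <;> by_cases hB : (G.bd p.2).2 = p.1
    · exact absurd (hA.trans hB.symm) (G.no_loops p.2)
    all_goals
      simp [hg1def, hg2def, hggdef, hA, hB, Set.Finite.mem_toFinset]
  -- inner sums
  have hg_inner_summable : ∀ v, Summable fun e => gg (v, e) := by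
    intro v
    apply summable_of_ne_finset_zero (s := (G.locFin v).toFinset)
    intro e he
    simp only [hggdef]
    exact if_neg he
  have hg_inner : ∀ v, ∑' e, gg (v, e) = ∑ e ∈ (G.locFin v).toFinset, T v e := by
    intro v
    rw [tsum_eq_sum (s := (G.locFin v).toFinset)
      (fun e he => by simp only [hggdef]; exact if_neg he)]
    exact Finset.sum_congr rfl fun e he => by simp only [hggdef]; exact if_pos he
  have hDsum : Summable fun v =>
      (1 + ct ^ 2) * (δ ^ 2 * ‖f v‖ ^ 2 + ‖Bt (Jdec f) v‖ ^ 2) :=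
    (((hfs.summable.mul_left (δ ^ 2)).add hws.summable).mul_left (1 + ct ^ 2))
  have hgg_summable : Summable gg := by
    refine (summable_prod_of_nonneg hggnn).2 ⟨hg_inner_summable, ?_⟩
    refine Summable.of_nonneg_of_le (fun v => tsum_nonneg fun e => hggnn _) (fun v => ?_) hDsum
    rw [hg_inner v]
    exact key v
  have hgg_tsum : ∑' p, gg p
      ≤ (1 + ct ^ 2) * (δ ^ 2 * ‖f‖ ^ 2 + ‖Bt (Jdec f)‖ ^ 2) := by
    rw [Summable.tsum_prod' hgg_summable hg_inner_summable]
    calc ∑' v, ∑' e, gg (v, e) = ∑' v, ∑ e ∈ (G.locFin v).toFinset, T v e :=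
          tsum_congr hg_inner
      _ ≤ ∑' v, (1 + ct ^ 2) * (δ ^ 2 * ‖f v‖ ^ 2 + ‖Bt (Jdec f) v‖ ^ 2) := by
          refine Summable.tsum_le_tsum key ?_ hDsum
          refine Summable.of_nonneg_of_le
            (fun v => Finset.sum_nonneg fun e _ => hTnn _ _) key hDsum
      _ = (1 + ct ^ 2) * (δ ^ 2 * ‖f‖ ^ 2 + ‖Bt (Jdec f)‖ ^ 2) := by
          rw [tsum_mul_left, Summable.tsum_add (hfs.summable.mul_left (δ ^ 2)) hws.summable,
            tsum_mul_left, hfs.tsum_eq, hws.tsum_eq]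
  -- summability of g1 and g2
  have hg1_le : ∀ p, g1 p ≤ gg p := fun p => by
    rw [hg_eq p]; exact le_add_of_nonneg_right (hg2nn p)
  have hg2_le : ∀ p, g2 p ≤ gg p := fun p => by
    rw [hg_eq p]; exact le_add_of_nonneg_left (hg1nn p)
  have hg1_summable : Summable g1 := Summable.of_nonneg_of_le hg1nn hg1_le hgg_summable
  have hg2_summable : Summable g2 := Summable.of_nonneg_of_le hg2nn hg2_le hgg_summable
  -- injections from edges
  have hi1 : Function.Injective (fun e : E => ((G.bd e).1, e)) := by
    intro e e' h
    exact (Prod.ext_iff.1 h).2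
  have hi2 : Function.Injective (fun e : E => ((G.bd e).2, e)) := by
    intro e e' h
    exact (Prod.ext_iff.1 h).2
  have h1comp : (g1 ∘ fun e : E => ((G.bd e).1, e)) = fun e => T (G.bd e).1 e := by
    funext e
    simp [hg1def]
  have h2comp : (g2 ∘ fun e : E => ((G.bd e).2, e)) = fun e => T (G.bd e).2 e := by
    funext e
    simp [hg2def]
  have hS1 : Summable fun e => T (G.bd e).1 e := by
    have := hg1_summable.comp_injective hi1
    rwa [h1comp] at this
  have hS2 : Summable fun e => T (G.bd e).2 e := by
    have := hg2_summable.comp_injective hi2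
    rwa [h2comp] at this
  have ht1 : ∑' e, T (G.bd e).1 e ≤ ∑' p, g1 p := by
    have := tsum_comp_le_tsum_of_inj hg1_summable hg1nn hi1
    rwa [h1comp] at this
  have ht2 : ∑' e, T (G.bd e).2 e ≤ ∑' p, g2 p := by
    have := tsum_comp_le_tsum_of_inj hg2_summable hg2nn hi2
    rwa [h2comp] at this
  have hg12 : ∑' p, g1 p + ∑' p, g2 p = ∑' p, gg p := by
    rw [← Summable.tsum_add hg1_summable hg2_summable]
    exact tsum_congr fun p => (hg_eq p).symm
  -- `‖Bt (Jdec f)‖ ≤ δ ‖f‖`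
  have hwsmall : ‖Bt (Jdec f)‖ ^ 2 ≤ δ ^ 2 * ‖f‖ ^ 2 := by
    have h := hBt_small f hf
    nlinarith [norm_nonneg (Bt (Jdec f)), norm_nonneg f, hδ.le]
  -- assemble
  have hmain : (Summable fun e => T (G.bd e).1 e) ∧
      ∑' e, T (G.bd e).1 e ≤ δ ^ 2 * (1 + ct ^ 2) * ‖f‖ ^ 2 := by
    refine ⟨hS1, ?_⟩
    have hhalf : ∑' e, T (G.bd e).1 e
        = (∑' e, T (G.bd e).1 e + ∑' e, T (G.bd e).2 e) / 2 := by
      rw [show ∑' e, T (G.bd e).2 e = ∑' e, T (G.bd e).1 e from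
        tsum_congr fun e => (hsym e).symm]
      ring
    rw [hhalf]
    have hct2 : (0:ℝ) ≤ 1 + ct ^ 2 := by positivity
    have := hgg_tsum
    nlinarith [ht1, ht2, hg12, hwsmall, hct2]
  exact ⟨by simpa only [hTdef] using hmain.1, by simpa only [hTdef] using hmain.2⟩
end
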